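/- Let σ ≥ 0. For every smooth divergence-free vector field b on 𝕋³ and every smooth ℝ²-valued function V on 𝕋³ with 𝒫V = V, writing B = b·∇, the following identity holds: ⟨(𝒫B)²V, Λ^{2σ}V⟩ + ‖Λ^σ 𝒫BV‖² = ⟨[Λ^σ, B][𝒫, B]V, Λ^σV⟩ + ⟨Λ^σ[𝒫, B]V, [Λ^σ, B]V⟩ + ⟨[[Λ^σ, B], B]V, Λ^σV⟩ + ‖[Λ^σ, B]V‖². -/

import Mathlib

/-!
We model functions on the torus `𝕋³ = ℝ³/ℤ³` by their Fourier coefficients,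
indexed by `n ∈ ℤ³` (the actual frequency being `k = 2πn ∈ 2πℤ³`).
Smoothness corresponds to rapid decay of the Fourier coefficients, real-valuedness
to the usual conjugation symmetry, products to convolution of coefficients, and
the `L²` norm/inner product are given by Plancherel.
-/

noncomputable section

open scoped BigOperators
open Complex

/-- Fourier frequencies of functions on `𝕋³`, indexed by `n ∈ ℤ³`; the actual
frequency is `k = 2πn ∈ 2πℤ³`. -/
abbrev Z3 : Type := Fin 3 → ℤ

/-- The Euclidean length `|k|` of the frequency `k = 2πn`. -/
def knorm (n : Z3) : ℝ := 2 * Real.pi * Real.sqrt (∑ i, ((n i : ℝ)) ^ 2)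

/-- `Λ^s = (−Δ)^{s/2}` as a Fourier multiplier: `(Λ^s f)^_k = |k|^s f^_k`. -/
def lam (s : ℝ) (c : Z3 → ℂ) : Z3 → ℂ :=
  fun n => Complex.ofReal (knorm n ^ s) * c n

/-- Squared `L²(𝕋³)` norm (Plancherel). -/
def l2sq (c : Z3 → ℂ) : ℝ := ∑' n : Z3, ‖c n‖ ^ 2

/-- `L²(𝕋³)` norm. -/
def l2norm (c : Z3 → ℂ) : ℝ := Real.sqrt (l2sq c)

/-- `L²(𝕋³)` inner product of two real-valued functions (Plancherel). -/
def inner2 (c d : Z3 → ℂ) : ℝ := (∑' n : Z3, c n * (starRingEnd ℂ) (d n)).re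

/-- Sobolev `H^σ` norm: `(∑_k (1+|k|^{2σ})|f^_k|²)^{1/2}`. -/
def hnorm (σ : ℝ) (c : Z3 → ℂ) : ℝ :=
  Real.sqrt (∑' n : Z3, (1 + knorm n ^ (2 * σ)) * ‖c n‖ ^ 2)

/-- The partial derivative `∂_j` as a Fourier multiplier. -/
def pd (j : Fin 3) (c : Z3 → ℂ) : Z3 → ℂ :=
  fun n => Complex.I * Complex.ofReal (2 * Real.pi * (n j : ℝ)) * c n

/-- Pointwise product of two functions = convolution of Fourier coefficients. -/
def conv (c d : Z3 → ℂ) : Z3 → ℂ := fun n => ∑' m : Z3, c m * d (n - m)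

/-- The coefficients of a real-valued function. -/
def IsRealFn (c : Z3 → ℂ) : Prop := ∀ n : Z3, c (-n) = (starRingEnd ℂ) (c n)

/-- Rapid decay of the Fourier coefficients, i.e. smoothness of the function. -/
def RapidDecay (c : Z3 → ℂ) : Prop :=
  ∀ N : ℕ, ∃ C : ℝ, ∀ n : Z3, ‖c n‖ * (1 + knorm n) ^ N ≤ C

/-- A smooth real-valued function on `𝕋³`, described by its Fourier coefficients. -/
def SmoothFun (c : Z3 → ℂ) : Prop := IsRealFn c ∧ RapidDecay c

/-- Zero mean. -/
def ZeroMean (c : Z3 → ℂ) : Prop := c 0 = 0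

/-- A divergence-free vector field `b = (b¹,b²,b³)`: `∀ k, ∑_j k_j b^j_k = 0`. -/
def DivFree (b : Fin 3 → Z3 → ℂ) : Prop :=
  ∀ n : Z3, ∑ j : Fin 3, (n j : ℂ) * b j n = 0

/-- The transport operator `b·∇ = b¹∂_{x₁} + b²∂_{x₂} + b³∂_z`. -/
def transport (b : Fin 3 → Z3 → ℂ) (c : Z3 → ℂ) : Z3 → ℂ :=
  fun n => ∑ j : Fin 3, conv (b j) (pd j c) n

/-- The commutator `[Λ^s, b·∇]`. -/
def commLam (s : ℝ) (b : Fin 3 → Z3 → ℂ) (c : Z3 → ℂ) : Z3 → ℂ :=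
  lam s (transport b c) - transport b (lam s c)

/-- `H^σ` norm of a 3-component vector field. -/
def hnormV3 (σ : ℝ) (b : Fin 3 → Z3 → ℂ) : ℝ :=
  Real.sqrt (∑ j : Fin 3, (hnorm σ (b j)) ^ 2)

/-- `Λ^s` acting componentwise on ℝ²-valued functions. -/
def lamV (s : ℝ) (V : Fin 2 → Z3 → ℂ) : Fin 2 → Z3 → ℂ := fun i => lam s (V i)

/-- `b·∇` acting componentwise on ℝ²-valued functions. -/
def transportV (b : Fin 3 → Z3 → ℂ) (V : Fin 2 → Z3 → ℂ) : Fin 2 → Z3 → ℂ :=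
  fun i => transport b (V i)

/-- `[Λ^s, b·∇]` acting componentwise on ℝ²-valued functions. -/
def commLamV (s : ℝ) (b : Fin 3 → Z3 → ℂ) (V : Fin 2 → Z3 → ℂ) : Fin 2 → Z3 → ℂ :=
  fun i => commLam s b (V i)

/-- `L²` norm of an ℝ²-valued function. -/
def l2normV (V : Fin 2 → Z3 → ℂ) : ℝ := Real.sqrt (∑ i : Fin 2, l2sq (V i))

/-- `L²` inner product of ℝ²-valued functions. -/
def inner2V (V W : Fin 2 → Z3 → ℂ) : ℝ := ∑ i : Fin 2, inner2 (V i) (W i)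

/-- `H^σ` norm of an ℝ²-valued function. -/
def hnormV2 (σ : ℝ) (V : Fin 2 → Z3 → ℂ) : ℝ :=
  Real.sqrt (∑ i : Fin 2, (hnorm σ (V i)) ^ 2)

/-- The hydrostatic Leray projection `𝒫φ = φ − ∇_h Δ_h^{-1} ∇_h · φ̄` as a Fourier
multiplier: the barotropic part `φ̄` consists of the modes with `n₃ = 0`, on which
`∇_h Δ_h^{-1} ∇_h ·` acts as `φ̂ ↦ n_h (n_h · φ̂)/|n_h|²` (for `n_h ≠ 0`). -/
def hproj (V : Fin 2 → Z3 → ℂ) : Fin 2 → Z3 → ℂ := fun i n =>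
  if n 2 = 0 ∧ ¬(n 0 = 0 ∧ n 1 = 0) then
    V i n - (n i.castSucc : ℂ) * ((n 0 : ℂ) * V 0 n + (n 1 : ℂ) * V 1 n) /
      (((n 0 : ℂ)) ^ 2 + ((n 1 : ℂ)) ^ 2)
  else V i n

/-- `ℚ = I − 𝒫`. -/
def qproj (V : Fin 2 → Z3 → ℂ) : Fin 2 → Z3 → ℂ := fun i => V i - hproj V i

/-- The commutator `[𝒫, b·∇]` on ℝ²-valued functions. -/
def commProj (b : Fin 3 → Z3 → ℂ) (V : Fin 2 → Z3 → ℂ) : Fin 2 → Z3 → ℂ :=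
  fun i => hproj (transportV b V) i - transportV b (hproj V) i

/-- A smooth ℝ²-valued function on `𝕋³`. -/
def SmoothV2 (V : Fin 2 → Z3 → ℂ) : Prop := ∀ i, SmoothFun (V i)

/-- A smooth vector field on `𝕋³`. -/
def SmoothV3 (b : Fin 3 → Z3 → ℂ) : Prop := ∀ j, SmoothFun (b j)

/-- `∂_z b^h = ∂_z (b¹, b²)`. -/
def dzbh (b : Fin 3 → Z3 → ℂ) : Fin 2 → Z3 → ℂ := fun i => pd 2 (b i.castSucc)

/-- `𝒫B V = 𝒫(b·∇V)`. -/
def PB (b : Fin 3 → Z3 → ℂ) (V : Fin 2 → Z3 → ℂ) : Fin 2 → Z3 → ℂ :=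
  hproj (transportV b V)







/-- the integer vector as a euclidean vector -/
def ev (n : Z3) : EuclideanSpace ℝ (Fin 3) := WithLp.toLp 2 (fun i => (n i : ℝ))

lemma knorm_eq (n : Z3) : knorm n = 2 * Real.pi * ‖ev n‖ := by
  rw [EuclideanSpace.norm_eq]
  simp [knorm, ev, sq_abs]

lemma knorm_nonneg (n : Z3) : 0 ≤ knorm n := by
  rw [knorm_eq]; positivity

lemma knorm_add_le (a b : Z3) : knorm (a + b) ≤ knorm a + knorm b := by
  have hev : ev (a + b) = ev a + ev b := by
    ext i; simp [ev]
  rw [knorm_eq, knorm_eq, knorm_eq, hev]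
  have := norm_add_le (ev a) (ev b)
  nlinarith [Real.pi_pos]

lemma abs_le_knorm (n : Z3) (j : Fin 3) : 2 * Real.pi * |(n j : ℝ)| ≤ knorm n := by
  rw [knorm_eq]
  have h1 : |(n j : ℝ)| = ‖ev n j‖ := by simp [ev]
  have h2 : ‖ev n j‖ ≤ ‖ev n‖ := by
    rw [EuclideanSpace.norm_eq]
    have : ‖ev n j‖ ^ 2 ≤ ∑ i, ‖ev n i‖ ^ 2 :=
      Finset.single_le_sum (f := fun i => ‖ev n i‖ ^ 2) (fun i _ => by positivity) (Finset.mem_univ j)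
    nlinarith [Real.sqrt_le_sqrt this, Real.sq_sqrt (by positivity : (0:ℝ) ≤ ∑ i, ‖ev n i‖^2),
      Real.sqrt_nonneg (∑ i, ‖ev n i‖ ^ 2), abs_nonneg (ev n j)]
  nlinarith [Real.pi_pos]

lemma one_add_knorm_mul (a b : Z3) :
    1 + knorm (a + b) ≤ (1 + knorm a) * (1 + knorm b) := by
  have := knorm_add_le a b
  nlinarith [knorm_nonneg a, knorm_nonneg b]

lemma one_le_one_add_knorm (n : Z3) : 1 ≤ 1 + knorm n := by linarith [knorm_nonneg n]

lemma abs_le_one_add_knorm (n : Z3) (j : Fin 3) : |(n j : ℝ)| ≤ 1 + knorm n := by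
  have := abs_le_knorm n j
  nlinarith [Real.pi_gt_three, abs_nonneg ((n j : ℝ)), knorm_nonneg n]

def wt (m : ℤ) : ℝ := ((1 + |(m:ℝ)|) ^ 2)⁻¹

lemma wt_nonneg (m : ℤ) : 0 ≤ wt m := by unfold wt; positivity

lemma summable_wt : Summable wt := by
  have hnat : Summable (fun k : ℕ => ((1 + (k:ℝ)) ^ 2)⁻¹) := by
    have := (Real.summable_one_div_nat_pow (p := 2)).2 one_lt_two
    have h2 := (summable_nat_add_iff (f := fun n : ℕ => 1 / (n:ℝ)^2) 1).2 this
    refine h2.congr fun k => ?_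
    push_cast; rw [one_div]; ring_nf
  apply Summable.of_nat_of_neg
  · refine hnat.congr fun k => ?_; simp [wt]
  · refine hnat.congr fun k => ?_; simp [wt]

def e3 : Z3 ≃ ℤ × ℤ × ℤ where
  toFun n := (n 0, n 1, n 2)
  invFun p := ![p.1, p.2.1, p.2.2]
  left_inv n := by funext i; fin_cases i <;> rfl
  right_inv p := rfl

lemma summable_wt3 : Summable (fun n : Z3 => wt (n 0) * (wt (n 1) * wt (n 2))) := by
  have h2 : Summable (fun p : ℤ × ℤ => wt p.1 * wt p.2) :=
    summable_wt.mul_of_nonneg summable_wt wt_nonneg wt_nonneg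
  have h3 : Summable (fun p : ℤ × ℤ × ℤ => wt p.1 * (wt p.2.1 * wt p.2.2)) :=
    summable_wt.mul_of_nonneg h2 wt_nonneg (fun p => mul_nonneg (wt_nonneg _) (wt_nonneg _))
  exact ((Equiv.summable_iff (f := fun p : ℤ×ℤ×ℤ => wt p.1 * (wt p.2.1 * wt p.2.2)) e3).2 h3).congr (fun n => rfl)

lemma summable_weight : Summable (fun n : Z3 => ((1 + knorm n) ^ 6)⁻¹) := by
  refine Summable.of_nonneg_of_le (fun n => by positivity) (fun n => ?_) summable_wt3
  have h : ∀ j : Fin 3, |(n j : ℝ)| ≤ knorm n := fun j => by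
    have := abs_le_knorm n j
    nlinarith [Real.pi_gt_three, abs_nonneg ((n j : ℝ))]
  have hpos : ∀ j : Fin 3, (0:ℝ) < (1 + |(n j : ℝ)|) ^ 2 := fun j => by positivity
  have h6 : (1 + |(n 0 : ℝ)|) ^ 2 * ((1 + |(n 1 : ℝ)|) ^ 2 * (1 + |(n 2 : ℝ)|) ^ 2)
      ≤ (1 + knorm n) ^ 6 := by
    calc (1 + |(n 0 : ℝ)|) ^ 2 * ((1 + |(n 1 : ℝ)|) ^ 2 * (1 + |(n 2 : ℝ)|) ^ 2)
        ≤ (1 + knorm n)^2 * ((1 + knorm n)^2 * (1 + knorm n)^2) := by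
          gcongr (1+?_)^2 * ((1+?_)^2 * (1+?_)^2) <;> [exact h 0; exact h 1; exact h 2]
      _ = (1 + knorm n) ^ 6 := by ring
  rw [wt, wt, wt, ← mul_inv, ← mul_inv]
  exact inv_anti₀ (by positivity) h6

lemma opk (n : Z3) : (0:ℝ) < 1 + knorm n := by linarith [knorm_nonneg n]
lemma opk_pow (n : Z3) (N : ℕ) : (0:ℝ) ≤ (1 + knorm n) ^ N := pow_nonneg (opk n).le N

namespace RapidDecay

lemma bound {c : Z3 → ℂ} (hc : RapidDecay c) (N : ℕ) :
    ∃ C : ℝ, 0 ≤ C ∧ ∀ n : Z3, ‖c n‖ * (1 + knorm n) ^ N ≤ C := by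
  obtain ⟨C, hC⟩ := hc N
  exact ⟨max C 0, le_max_right _ _, fun n => le_trans (hC n) (le_max_left _ _)⟩

lemma summable_mul {c : Z3 → ℂ} (hc : RapidDecay c) (M : ℕ) :
    Summable (fun n => (1 + knorm n) ^ M * ‖c n‖) := by
  obtain ⟨C, hC0, hC⟩ := hc.bound (M + 6)
  refine Summable.of_nonneg_of_le (fun n => mul_nonneg (opk_pow n M) (norm_nonneg _)) (fun n => ?_)
    (summable_weight.mul_left C)
  have h := hC n
  rw [pow_add] at h
  have hp : (0:ℝ) < (1 + knorm n) ^ 6 := pow_pos (opk n) 6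
  rw [mul_comm C, inv_mul_eq_div, le_div_iff₀ hp]
  nlinarith [norm_nonneg (c n), pow_nonneg (knorm_nonneg n) M]

lemma summable_norm {c : Z3 → ℂ} (hc : RapidDecay c) :
    Summable (fun n => ‖c n‖) := by
  simpa using hc.summable_mul 0

lemma bdd {c : Z3 → ℂ} (hc : RapidDecay c) : ∃ C : ℝ, 0 ≤ C ∧ ∀ n, ‖c n‖ ≤ C := by
  obtain ⟨C, hC0, hC⟩ := hc.bound 0
  exact ⟨C, hC0, fun n => by simpa using hC n⟩

lemma sub {c d : Z3 → ℂ} (hc : RapidDecay c) (hd : RapidDecay d) :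
    RapidDecay (fun n => c n - d n) := by
  intro N
  obtain ⟨C, hC0, hC⟩ := hc.bound N
  obtain ⟨D, hD0, hD⟩ := hd.bound N
  refine ⟨C + D, fun n => ?_⟩
  have h1 : ‖c n - d n‖ ≤ ‖c n‖ + ‖d n‖ := norm_sub_le _ _
  have h2 : (0:ℝ) ≤ (1 + knorm n) ^ N := opk_pow n N
  nlinarith [hC n, hD n]

lemma add {c d : Z3 → ℂ} (hc : RapidDecay c) (hd : RapidDecay d) :
    RapidDecay (fun n => c n + d n) := by
  have := hc.sub (fun N => by
    obtain ⟨C, hC0, hC⟩ := hd.bound N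
    exact ⟨C, fun n => by simpa using hC n⟩ : RapidDecay (fun n => -d n))
  refine fun N => (this N).imp fun C hC n => ?_
  simpa [sub_neg_eq_add] using hC n

end RapidDecay

lemma summable_mul_conj {c d : Z3 → ℂ} (hc : RapidDecay c) (hd : RapidDecay d) :
    Summable (fun n => c n * (starRingEnd ℂ) (d n)) := by
  obtain ⟨D, hD0, hD⟩ := hd.bdd
  refine Summable.of_norm (Summable.of_nonneg_of_le (fun n => norm_nonneg _)
    (fun n => ?_) (hc.summable_norm.mul_right D))
  rw [norm_mul, RCLike.norm_conj]
  exact mul_le_mul_of_nonneg_left (hD n) (norm_nonneg _)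

lemma summable_normsq {c : Z3 → ℂ} (hc : RapidDecay c) :
    Summable (fun n => ‖c n‖ ^ 2) := by
  obtain ⟨D, hD0, hD⟩ := hc.bdd
  refine Summable.of_nonneg_of_le (fun n => by positivity)
    (fun n => ?_) (hc.summable_norm.mul_left D)
  calc ‖c n‖ ^ 2 = ‖c n‖ * ‖c n‖ := sq (‖c n‖) ▸ by ring
    _ ≤ D * ‖c n‖ := mul_le_mul_of_nonneg_right (hD n) (norm_nonneg _)

lemma rd_lam {c : Z3 → ℂ} {s : ℝ} (hs : 0 ≤ s) (hc : RapidDecay c) :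
    RapidDecay (lam s c) := by
  intro N
  obtain ⟨C, hC0, hC⟩ := hc.bound (N + ⌈s⌉₊)
  refine ⟨C, fun n => ?_⟩
  have hks : knorm n ^ s ≤ (1 + knorm n) ^ (⌈s⌉₊ : ℕ) := by
    calc knorm n ^ s ≤ (1 + knorm n) ^ s :=
          Real.rpow_le_rpow (knorm_nonneg n) (by linarith [knorm_nonneg n]) hs
      _ ≤ (1 + knorm n) ^ ((⌈s⌉₊ : ℕ) : ℝ) :=
          Real.rpow_le_rpow_of_exponent_le (one_le_one_add_knorm n) (Nat.le_ceil s)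
      _ = (1 + knorm n) ^ (⌈s⌉₊ : ℕ) := Real.rpow_natCast _ _
  have hnorm : ‖lam s c n‖ = knorm n ^ s * ‖c n‖ := by
    rw [lam, norm_mul, Complex.norm_real, Real.norm_eq_abs,
      _root_.abs_of_nonneg (Real.rpow_nonneg (knorm_nonneg n) s)]
  rw [hnorm]
  calc knorm n ^ s * ‖c n‖ * (1 + knorm n) ^ N
      ≤ (1 + knorm n) ^ (⌈s⌉₊:ℕ) * ‖c n‖ * (1 + knorm n) ^ N := by
        have : (0:ℝ) ≤ ‖c n‖ * (1 + knorm n)^N := mul_nonneg (norm_nonneg _) (opk_pow n N)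
        nlinarith [norm_nonneg (c n), opk_pow n N]
    _ = ‖c n‖ * (1 + knorm n) ^ (N + ⌈s⌉₊) := by rw [pow_add]; ring
    _ ≤ C := hC n

lemma rd_pd {c : Z3 → ℂ} (j : Fin 3) (hc : RapidDecay c) : RapidDecay (pd j c) := by
  intro N
  obtain ⟨C, hC0, hC⟩ := hc.bound (N + 1)
  refine ⟨C, fun n => ?_⟩
  have hnorm : ‖pd j c n‖ = |2 * Real.pi * (n j : ℝ)| * ‖c n‖ := by
    rw [pd, norm_mul, norm_mul, Complex.norm_I, one_mul, Complex.norm_real, Real.norm_eq_abs]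
  have hb : |2 * Real.pi * (n j : ℝ)| ≤ 1 + knorm n := by
    rw [abs_mul, _root_.abs_of_nonneg (by positivity : (0:ℝ) ≤ 2 * Real.pi)]
    linarith [abs_le_knorm n j, knorm_nonneg n]
  rw [hnorm]
  calc |2 * Real.pi * (n j : ℝ)| * ‖c n‖ * (1 + knorm n) ^ N
      ≤ (1 + knorm n) * ‖c n‖ * (1 + knorm n) ^ N := by
        have : (0:ℝ) ≤ ‖c n‖ * (1 + knorm n)^N := mul_nonneg (norm_nonneg _) (opk_pow n N)
        nlinarith
    _ = ‖c n‖ * (1 + knorm n) ^ (N + 1) := by rw [pow_add]; ring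
    _ ≤ C := hC n

lemma conv_norm_le {c d : Z3 → ℂ} (hc : RapidDecay c) (hd : RapidDecay d) (n : Z3) :
    Summable (fun m => ‖c m * d (n - m)‖) ∧
    ‖conv c d n‖ ≤ ∑' m, ‖c m * d (n - m)‖ := by
  obtain ⟨D, hD0, hD⟩ := hd.bdd
  have hs : Summable (fun m => ‖c m * d (n - m)‖) := by
    refine Summable.of_nonneg_of_le (fun m => norm_nonneg _) (fun m => ?_)
      (hc.summable_norm.mul_right D)
    rw [norm_mul]
    exact mul_le_mul_of_nonneg_left (hD _) (norm_nonneg _)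
  exact ⟨hs, norm_tsum_le_tsum_norm hs⟩

lemma rd_conv {c d : Z3 → ℂ} (hc : RapidDecay c) (hd : RapidDecay d) :
    RapidDecay (conv c d) := by
  intro N
  obtain ⟨D, hD0, hD⟩ := hd.bound N
  refine ⟨D * ∑' m, (1 + knorm m) ^ N * ‖c m‖, fun n => ?_⟩
  obtain ⟨hs, hle⟩ := conv_norm_le hc hd n
  have hkey : ∀ m : Z3, ‖c m * d (n - m)‖ * (1 + knorm n) ^ N
      ≤ D * ((1 + knorm m) ^ N * ‖c m‖) := by
    intro m
    have h1 : (1 + knorm n) ^ N ≤ ((1 + knorm m) * (1 + knorm (n - m))) ^ N := by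
      apply pow_le_pow_left₀ (opk n).le
      have := one_add_knorm_mul m (n - m)
      simpa using this
    rw [norm_mul, mul_pow] at *
    calc ‖c m‖ * ‖d (n-m)‖ * (1 + knorm n) ^ N
        ≤ ‖c m‖ * ‖d (n-m)‖ * ((1 + knorm m) ^ N * (1 + knorm (n-m)) ^ N) := by
          exact mul_le_mul_of_nonneg_left h1 (mul_nonneg (norm_nonneg _) (norm_nonneg _))
      _ = ((1 + knorm m) ^ N * ‖c m‖) * (‖d (n-m)‖ * (1 + knorm (n-m)) ^ N) := by ring
      _ ≤ ((1 + knorm m) ^ N * ‖c m‖) * D :=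
          mul_le_mul_of_nonneg_left (hD _) (mul_nonneg (opk_pow m N) (norm_nonneg _))
      _ = D * ((1 + knorm m) ^ N * ‖c m‖) := by ring
  have h2 : ‖conv c d n‖ * (1 + knorm n) ^ N ≤ ∑' m, ‖c m * d (n - m)‖ * (1 + knorm n) ^ N := by
    rw [tsum_mul_right]
    exact mul_le_mul_of_nonneg_right hle (opk_pow n N)
  refine le_trans h2 ?_
  rw [← tsum_mul_left]
  exact Summable.tsum_le_tsum hkey (hs.mul_right _) ((hc.summable_mul N).mul_left D)

/-! hproj lemmas -/

lemma denom_pos {n : Z3} (h : ¬(n 0 = 0 ∧ n 1 = 0)) :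
    (0:ℝ) < ((n 0 : ℝ)) ^ 2 + ((n 1 : ℝ)) ^ 2 := by
  rcases not_and_or.1 h with h0 | h0
  · have h1 : ((n 0 : ℝ)) ≠ 0 := Int.cast_ne_zero.2 h0
    nlinarith [sq_nonneg ((n 1 : ℝ)), mul_self_pos.2 h1]
  · have h1 : ((n 1 : ℝ)) ≠ 0 := Int.cast_ne_zero.2 h0
    nlinarith [sq_nonneg ((n 0 : ℝ)), mul_self_pos.2 h1]

lemma denom_cast (n : Z3) :
    (((n 0 : ℂ)) ^ 2 + ((n 1 : ℂ)) ^ 2) = ((((n 0 : ℝ)) ^ 2 + ((n 1 : ℝ)) ^ 2 : ℝ) : ℂ) := by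
  push_cast; ring

lemma denom_ne_zero {n : Z3} (h : ¬(n 0 = 0 ∧ n 1 = 0)) :
    (((n 0 : ℂ)) ^ 2 + ((n 1 : ℂ)) ^ 2) ≠ 0 := by
  rw [denom_cast]
  exact_mod_cast (denom_pos h).ne'

lemma hproj_norm_le (V : Fin 2 → Z3 → ℂ) (i : Fin 2) (n : Z3) :
    ‖hproj V i n‖ ≤ ‖V i n‖ + (‖V 0 n‖ + ‖V 1 n‖) := by
  rw [hproj]
  split_ifs with h
  · obtain ⟨-, h01⟩ := h
    have hden := denom_pos h01
    have key : ‖(n i.castSucc : ℂ) * ((n 0 : ℂ) * V 0 n + (n 1 : ℂ) * V 1 n) /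
        (((n 0 : ℂ)) ^ 2 + ((n 1 : ℂ)) ^ 2)‖ ≤ ‖V 0 n‖ + ‖V 1 n‖ := by
      rw [denom_cast, norm_div, Complex.norm_real, Real.norm_eq_abs,
        _root_.abs_of_nonneg hden.le, div_le_iff₀ hden, norm_mul, Complex.norm_intCast]
      have hnum : ‖(n 0 : ℂ) * V 0 n + (n 1 : ℂ) * V 1 n‖
          ≤ |((n 0 : ℝ))| * ‖V 0 n‖ + |((n 1 : ℝ))| * ‖V 1 n‖ := by
        refine le_trans (norm_add_le _ _) ?_
        rw [norm_mul, norm_mul, Complex.norm_intCast, Complex.norm_intCast]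
      have h0 := norm_nonneg (V 0 n); have h1 := norm_nonneg (V 1 n)
      have ha := abs_nonneg ((n 0 : ℝ)); have hb := abs_nonneg ((n 1 : ℝ))
      have hsa := abs_mul_abs_self ((n 0 : ℝ)); have hsb := abs_mul_abs_self ((n 1 : ℝ))
      fin_cases i
      · simp only [Fin.castSucc]
        calc |((n 0 : ℝ))| * ‖(n 0 : ℂ) * V 0 n + (n 1 : ℂ) * V 1 n‖
            ≤ |((n 0 : ℝ))| * (|((n 0 : ℝ))| * ‖V 0 n‖ + |((n 1 : ℝ))| * ‖V 1 n‖) :=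
              mul_le_mul_of_nonneg_left hnum ha
          _ ≤ (‖V 0 n‖ + ‖V 1 n‖) * (((n 0 : ℝ)) ^ 2 + ((n 1 : ℝ)) ^ 2) := by
              nlinarith [sq_nonneg (|((n 0 : ℝ))| - |((n 1 : ℝ))|)]
      · simp only [Fin.castSucc]
        calc |((n 1 : ℝ))| * ‖(n 0 : ℂ) * V 0 n + (n 1 : ℂ) * V 1 n‖
            ≤ |((n 1 : ℝ))| * (|((n 0 : ℝ))| * ‖V 0 n‖ + |((n 1 : ℝ))| * ‖V 1 n‖) :=
              mul_le_mul_of_nonneg_left hnum hb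
          _ ≤ (‖V 0 n‖ + ‖V 1 n‖) * (((n 0 : ℝ)) ^ 2 + ((n 1 : ℝ)) ^ 2) := by
              nlinarith [sq_nonneg (|((n 0 : ℝ))| - |((n 1 : ℝ))|)]
    calc ‖V i n - _‖ ≤ ‖V i n‖ + ‖(n i.castSucc : ℂ) * ((n 0 : ℂ) * V 0 n + (n 1 : ℂ) * V 1 n) /
          (((n 0 : ℂ)) ^ 2 + ((n 1 : ℂ)) ^ 2)‖ := norm_sub_le _ _
      _ ≤ ‖V i n‖ + (‖V 0 n‖ + ‖V 1 n‖) := by linarith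
  · linarith [norm_nonneg (V 0 n), norm_nonneg (V 1 n)]

lemma rd_congr {c d : Z3 → ℂ} (h : ∀ n, c n = d n) (hc : RapidDecay c) : RapidDecay d :=
  fun N => (hc N).imp fun C hC n => by rw [← h n]; exact hC n

lemma rd_hproj {V : Fin 2 → Z3 → ℂ} (hV : ∀ i, RapidDecay (V i)) (i : Fin 2) :
    RapidDecay (hproj V i) := by
  intro N
  obtain ⟨Ci, hCi0, hCi⟩ := (hV i).bound N
  obtain ⟨C0, hC00, hC0⟩ := (hV 0).bound N
  obtain ⟨C1, hC10, hC1⟩ := (hV 1).bound N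
  refine ⟨Ci + (C0 + C1), fun n => ?_⟩
  have h := hproj_norm_le V i n
  have hp := opk_pow n N
  nlinarith [hCi n, hC0 n, hC1 n]

lemma rd_transport {b : Fin 3 → Z3 → ℂ} {c : Z3 → ℂ}
    (hb : ∀ j, RapidDecay (b j)) (hc : RapidDecay c) : RapidDecay (transport b c) := by
  have h0 := rd_conv (hb 0) (rd_pd 0 hc)
  have h1 := rd_conv (hb 1) (rd_pd 1 hc)
  have h2 := rd_conv (hb 2) (rd_pd 2 hc)
  refine rd_congr (fun n => ?_) ((h0.add (h1.add h2)))
  rw [transport, Fin.sum_univ_three]; ring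

lemma rd_commLam {s : ℝ} (hs : 0 ≤ s) {b : Fin 3 → Z3 → ℂ} {c : Z3 → ℂ}
    (hb : ∀ j, RapidDecay (b j)) (hc : RapidDecay c) : RapidDecay (commLam s b c) := by
  have h1 := rd_lam hs (rd_transport hb hc)
  have h2 := rd_transport hb (rd_lam hs hc)
  exact rd_congr (fun n => rfl) (h1.sub h2)

/-! S-level inner product machinery -/

def Sp (c d : Z3 → ℂ) : ℂ := ∑' n : Z3, c n * (starRingEnd ℂ) (d n)

def SpV (V W : Fin 2 → Z3 → ℂ) : ℂ := ∑ i : Fin 2, Sp (V i) (W i)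

lemma inner2_eq (c d : Z3 → ℂ) : inner2 c d = (Sp c d).re := rfl

lemma inner2V_eq (V W : Fin 2 → Z3 → ℂ) : inner2V V W = (SpV V W).re := by
  rw [inner2V, SpV, Complex.re_sum]
  rfl

lemma inner2V_comm (V W : Fin 2 → Z3 → ℂ) : inner2V V W = inner2V W V := by
  rw [inner2V, inner2V]
  refine Finset.sum_congr rfl fun i _ => ?_
  rw [inner2, inner2]
  have : ∑' n : Z3, W i n * (starRingEnd ℂ) (V i n)
      = star (∑' n : Z3, V i n * (starRingEnd ℂ) (W i n)) := by
    rw [tsum_star]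
    refine tsum_congr fun n => ?_
    simp [mul_comm]
  rw [this, Complex.star_def, Complex.conj_re]

lemma Sp_congr {c c' d : Z3 → ℂ} (h : ∀ n, c n = c' n) : Sp c d = Sp c' d :=
  tsum_congr fun n => by rw [h n]

lemma Sp_congr' {c d d' : Z3 → ℂ} (h : ∀ n, d n = d' n) : Sp c d = Sp c d' :=
  tsum_congr fun n => by rw [h n]

lemma Sp_lam_move (s : ℝ) (c d : Z3 → ℂ) : Sp (lam s c) d = Sp c (lam s d) := by
  refine tsum_congr fun n => ?_
  rw [lam, lam, map_mul, Complex.conj_ofReal]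
  ring

lemma Sp_add_left {c d e : Z3 → ℂ} (hc : RapidDecay c) (hd : RapidDecay d)
    (he : RapidDecay e) :
    Sp (fun n => c n + d n) e = Sp c e + Sp d e := by
  rw [Sp, Sp, Sp, ← Summable.tsum_add (summable_mul_conj hc he) (summable_mul_conj hd he)]
  exact tsum_congr fun n => by ring

lemma Sp_sub_left {c d e : Z3 → ℂ} (hc : RapidDecay c) (hd : RapidDecay d)
    (he : RapidDecay e) :
    Sp (fun n => c n - d n) e = Sp c e - Sp d e := by
  rw [Sp, Sp, Sp, ← Summable.tsum_sub (summable_mul_conj hc he) (summable_mul_conj hd he)]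
  exact tsum_congr fun n => by ring

lemma Sp_add_right {c d e : Z3 → ℂ} (hc : RapidDecay c) (hd : RapidDecay d)
    (he : RapidDecay e) :
    Sp c (fun n => d n + e n) = Sp c d + Sp c e := by
  rw [Sp, Sp, Sp, ← Summable.tsum_add (summable_mul_conj hc hd) (summable_mul_conj hc he)]
  refine tsum_congr fun n => by rw [map_add]; ring

lemma Sp_sub_right {c d e : Z3 → ℂ} (hc : RapidDecay c) (hd : RapidDecay d)
    (he : RapidDecay e) :
    Sp c (fun n => d n - e n) = Sp c d - Sp c e := by
  rw [Sp, Sp, Sp, ← Summable.tsum_sub (summable_mul_conj hc hd) (summable_mul_conj hc he)]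
  refine tsum_congr fun n => by rw [map_sub]; ring

lemma Sp_zero_right (c : Z3 → ℂ) : Sp c (fun _ => 0) = 0 := by
  rw [Sp]; simp

/-! lam algebra -/

lemma lam_lam {σ : ℝ} (hσ : 0 ≤ σ) (c : Z3 → ℂ) (n : Z3) :
    lam (2 * σ) c n = lam σ (lam σ c) n := by
  rw [lam, lam, lam]
  have h : knorm n ^ (2 * σ) = knorm n ^ σ * knorm n ^ σ := by
    rw [mul_comm 2 σ, Real.rpow_mul (knorm_nonneg n), Real.rpow_two, sq]
  rw [h, Complex.ofReal_mul]
  ring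

lemma lam_sub (s : ℝ) (c d : Z3 → ℂ) (n : Z3) :
    lam s (fun m => c m - d m) n = lam s c n - lam s d n := by
  rw [lam, lam, lam]; ring

lemma lam_add (s : ℝ) (c d : Z3 → ℂ) (n : Z3) :
    lam s (fun m => c m + d m) n = lam s c n + lam s d n := by
  rw [lam, lam, lam]; ring

/-! hproj algebra -/

lemma hproj_lam (s : ℝ) (V : Fin 2 → Z3 → ℂ) (i : Fin 2) (n : Z3) :
    hproj (lamV s V) i n = lamV s (hproj V) i n := by
  simp only [hproj, lamV, lam]
  split_ifs with h
  · have hne := denom_ne_zero h.2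
    field_simp
  · rfl

lemma hproj_idem (V : Fin 2 → Z3 → ℂ) (i : Fin 2) (n : Z3) :
    hproj (hproj V) i n = hproj V i n := by
  simp only [hproj]
  split_ifs with h
  · have hne := denom_ne_zero h.2
    have h0 : ((0:Fin 2).castSucc : Fin 3) = 0 := rfl
    have h1 : ((1:Fin 2).castSucc : Fin 3) = 1 := rfl
    simp only [h0, h1]
    field_simp
    ring
  · rfl

lemma hproj_sub (A B : Fin 2 → Z3 → ℂ) (i : Fin 2) (n : Z3) :
    hproj (fun j m => A j m - B j m) i n = hproj A i n - hproj B i n := by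
  simp only [hproj]
  split_ifs with h
  · have hne := denom_ne_zero h.2
    field_simp
    ring
  · rfl

lemma hproj_adjoint_pt (A B : Fin 2 → Z3 → ℂ) (n : Z3) :
    ∑ i : Fin 2, hproj A i n * (starRingEnd ℂ) (B i n)
      = ∑ i : Fin 2, A i n * (starRingEnd ℂ) (hproj B i n) := by
  simp only [hproj, Fin.sum_univ_two]
  split_ifs with h
  · have hne := denom_ne_zero h.2
    have h0 : ((0:Fin 2).castSucc : Fin 3) = 0 := rfl
    have h1 : ((1:Fin 2).castSucc : Fin 3) = 1 := rfl
    simp only [h0, h1, map_sub, map_div₀, map_mul, map_add, map_pow, map_intCast]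
    have hne' : (starRingEnd ℂ) (((n 0 : ℂ)) ^ 2 + ((n 1 : ℂ)) ^ 2) ≠ 0 := by
      simpa [map_add, map_pow, map_intCast] using hne
    field_simp
    ring
  · rfl

lemma SpV_hproj_adjoint {A B : Fin 2 → Z3 → ℂ}
    (hA : ∀ i, RapidDecay (A i)) (hB : ∀ i, RapidDecay (B i)) :
    SpV (hproj A) B = SpV A (hproj B) := by
  rw [SpV, SpV]
  simp only [Sp]
  rw [← Summable.tsum_finsetSum (f := fun i n => hproj A i n * (starRingEnd ℂ) (B i n))
    (fun i _ => summable_mul_conj (rd_hproj hA i) (hB i))]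
  rw [← Summable.tsum_finsetSum (f := fun i n => A i n * (starRingEnd ℂ) (hproj B i n))
    (fun i _ => summable_mul_conj (hA i) (rd_hproj hB i))]
  exact tsum_congr fun n => hproj_adjoint_pt A B n

/-! Skew-adjointness of the transport operator -/

def e1 : Z3 × Z3 ≃ Z3 × Z3 where
  toFun p := (p.1 + p.2, p.1)
  invFun q := (q.2, q.1 - q.2)
  left_inv p := by simp
  right_inv q := by simp

def e2 : Z3 × Z3 ≃ Z3 × Z3 where
  toFun p := (p.2, -p.1)
  invFun q := (-q.2, q.1)
  left_inv p := by simp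
  right_inv q := by simp

lemma skew_pt {b : Fin 3 → Z3 → ℂ} (hb : SmoothV3 b) (hdiv : DivFree b)
    (f g : Z3 → ℂ) (m k : Z3) :
    ∑ j : Fin 3, (b j m * pd j f k * (starRingEnd ℂ) (g (m + k))
      + f k * (starRingEnd ℂ) (b j (-m) * pd j g (k - -m))) = 0 := by
  have hc : ∀ j, (starRingEnd ℂ) (b j (-m)) = b j m := by
    intro j
    have h := (hb j).1 (-m)
    rw [neg_neg] at h
    exact h.symm
  have key : ∀ j : Fin 3, b j m * pd j f k * (starRingEnd ℂ) (g (m + k))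
      + f k * (starRingEnd ℂ) (b j (-m) * pd j g (k - -m))
      = (-(Complex.I * ((2 * Real.pi : ℝ) : ℂ) * f k * (starRingEnd ℂ) (g (m + k))))
        * ((m j : ℂ) * b j m) := by
    intro j
    have hadd : (k - -m) = m + k := by abel
    rw [hadd]
    simp only [pd, map_mul, Complex.conj_I, Complex.conj_ofReal, hc j]
    have c1 : ((2 * Real.pi * ((k j : ℤ) : ℝ) : ℝ) : ℂ)
        = ((2 * Real.pi : ℝ) : ℂ) * ((k j : ℤ) : ℂ) := by push_cast; ring
    have c2 : ((2 * Real.pi * (((m + k) j : ℤ) : ℝ) : ℝ) : ℂ)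
        = ((2 * Real.pi : ℝ) : ℂ) * (((m j : ℤ) : ℂ) + ((k j : ℤ) : ℂ)) := by
      have : (m + k) j = m j + k j := rfl
      rw [this]; push_cast; ring
    rw [c1, c2]
    ring
  calc ∑ j : Fin 3, (b j m * pd j f k * (starRingEnd ℂ) (g (m + k))
      + f k * (starRingEnd ℂ) (b j (-m) * pd j g (k - -m)))
      = ∑ j : Fin 3, (-(Complex.I * ((2 * Real.pi : ℝ) : ℂ) * f k
          * (starRingEnd ℂ) (g (m + k)))) * ((m j : ℂ) * b j m) :=
        Finset.sum_congr rfl fun j _ => key j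
    _ = (-(Complex.I * ((2 * Real.pi : ℝ) : ℂ) * f k * (starRingEnd ℂ) (g (m + k))))
        * ∑ j : Fin 3, (m j : ℂ) * b j m := by rw [Finset.mul_sum]
    _ = 0 := by rw [hdiv m, mul_zero]

section skew

variable {b : Fin 3 → Z3 → ℂ} (hb : SmoothV3 b) {f g : Z3 → ℂ}
  (hf : RapidDecay f) (hg : RapidDecay g)

/-- `F j (n, m) = b j m ⋅ (pd j f)(n-m) ⋅ conj (g n)` -/
private def Fk (b : Fin 3 → Z3 → ℂ) (f g : Z3 → ℂ) (j : Fin 3) : Z3 × Z3 → ℂ :=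
  fun p => b j p.2 * pd j f (p.1 - p.2) * (starRingEnd ℂ) (g p.1)

private def Gk (b : Fin 3 → Z3 → ℂ) (f g : Z3 → ℂ) (j : Fin 3) : Z3 × Z3 → ℂ :=
  fun p => f p.1 * (starRingEnd ℂ) (b j p.2 * pd j g (p.1 - p.2))

include hb hf hg in
lemma summable_Fk (j : Fin 3) : Summable (Fk b f g j) := by
  obtain ⟨Cg, hCg0, hCg⟩ := hg.bdd
  have hcomp : Summable ((Fk b f g j) ∘ e1) := by
    apply Summable.of_norm
    refine Summable.of_nonneg_of_le (fun p => norm_nonneg _) (fun p => ?_)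
      (((hb j).2.summable_norm).mul_of_nonneg
        (((rd_pd j hf).summable_norm).mul_left Cg)
        (fun p => norm_nonneg _) (fun p => mul_nonneg hCg0 (norm_nonneg _)))
    show ‖Fk b f g j (e1 p)‖ ≤ ‖b j p.1‖ * (Cg * ‖pd j f p.2‖)
    have he0 : Fk b f g j (e1 p)
        = b j p.1 * pd j f (p.1 + p.2 - p.1) * (starRingEnd ℂ) (g (p.1 + p.2)) := rfl
    have he : Fk b f g j (e1 p) = b j p.1 * pd j f p.2 * (starRingEnd ℂ) (g (p.1 + p.2)) := by
      rw [he0, add_sub_cancel_left]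
    rw [he, norm_mul, norm_mul, RCLike.norm_conj]
    calc ‖b j p.1‖ * ‖pd j f p.2‖ * ‖g (p.1 + p.2)‖
        ≤ ‖b j p.1‖ * ‖pd j f p.2‖ * Cg :=
          mul_le_mul_of_nonneg_left (hCg _) (mul_nonneg (norm_nonneg _) (norm_nonneg _))
      _ = ‖b j p.1‖ * (Cg * ‖pd j f p.2‖) := by ring
  exact (Equiv.summable_iff (f := Fk b f g j) e1).1 hcomp

include hb hf hg in
lemma summable_Gk (j : Fin 3) : Summable (Gk b f g j) := by
  obtain ⟨Cg, hCg0, hCg⟩ := (rd_pd j hg).bdd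
  have hbneg : Summable (fun m : Z3 => ‖b j (-m)‖) := by
    have := (hb j).2.summable_norm
    exact ((Equiv.neg Z3).summable_iff (f := fun m => ‖b j m‖)).2 this
  have hcomp : Summable ((Gk b f g j) ∘ e2) := by
    apply Summable.of_norm
    refine Summable.of_nonneg_of_le (fun p => norm_nonneg _) (fun p => ?_)
      (hbneg.mul_of_nonneg (hf.summable_norm.mul_left Cg)
        (fun p => norm_nonneg _) (fun p => mul_nonneg hCg0 (norm_nonneg _)))
    show ‖Gk b f g j (e2 p)‖ ≤ ‖b j (-p.1)‖ * (Cg * ‖f p.2‖)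
    have he : Gk b f g j (e2 p)
        = f p.2 * (starRingEnd ℂ) (b j (-p.1) * pd j g (p.2 + p.1)) := by
      show f p.2 * (starRingEnd ℂ) (b j (-p.1) * pd j g (p.2 - -p.1)) = _
      rw [sub_neg_eq_add]
    rw [he, norm_mul, RCLike.norm_conj, norm_mul]
    calc ‖f p.2‖ * (‖b j (-p.1)‖ * ‖pd j g (p.2 + p.1)‖)
        ≤ ‖f p.2‖ * (‖b j (-p.1)‖ * Cg) := by
          refine mul_le_mul_of_nonneg_left ?_ (norm_nonneg _)
          exact mul_le_mul_of_nonneg_left (hCg _) (norm_nonneg _)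
      _ = ‖b j (-p.1)‖ * (Cg * ‖f p.2‖) := by ring
  exact (Equiv.summable_iff (f := Gk b f g j) e2).1 hcomp

include hb hf hg in
lemma Sp_transport_left :
    Sp (transport b f) g = ∑ j : Fin 3, ∑' p : Z3 × Z3, Fk b f g j (e1 p) := by
  have step1 : Sp (transport b f) g
      = ∑ j : Fin 3, ∑' n : Z3, conv (b j) (pd j f) n * (starRingEnd ℂ) (g n) := by
    rw [Sp]
    rw [← Summable.tsum_finsetSum (f := fun j n => conv (b j) (pd j f) n * (starRingEnd ℂ) (g n))
      (fun j _ => summable_mul_conj (rd_conv (hb j).2 (rd_pd j hf)) hg)]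
    exact tsum_congr fun n => by rw [transport, Finset.sum_mul]
  rw [step1]
  refine Finset.sum_congr rfl fun j _ => ?_
  have step2 : ∀ n : Z3, conv (b j) (pd j f) n * (starRingEnd ℂ) (g n)
      = ∑' m : Z3, Fk b f g j (n, m) := by
    intro n
    rw [conv, ← tsum_mul_right]
    rfl
  calc ∑' n : Z3, conv (b j) (pd j f) n * (starRingEnd ℂ) (g n)
      = ∑' n : Z3, ∑' m : Z3, Fk b f g j (n, m) := tsum_congr step2
    _ = ∑' p : Z3 × Z3, Fk b f g j p :=
        (Summable.tsum_prod' (summable_Fk hb hf hg j)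
          (fun n => (summable_Fk hb hf hg j).prod_factor n)).symm
    _ = ∑' p : Z3 × Z3, Fk b f g j (e1 p) := (Equiv.tsum_eq e1 (Fk b f g j)).symm

include hb hf hg in
lemma Sp_transport_right :
    Sp f (transport b g) = ∑ j : Fin 3, ∑' p : Z3 × Z3, Gk b f g j (e2 p) := by
  have step1 : Sp f (transport b g)
      = ∑ j : Fin 3, ∑' n : Z3, f n * (starRingEnd ℂ) (conv (b j) (pd j g) n) := by
    rw [Sp]
    rw [← Summable.tsum_finsetSum (f := fun j n => f n * (starRingEnd ℂ) (conv (b j) (pd j g) n))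
      (fun j _ => summable_mul_conj hf (rd_conv (hb j).2 (rd_pd j hg)))]
    refine tsum_congr fun n => ?_
    rw [transport, map_sum, Finset.mul_sum]
  rw [step1]
  refine Finset.sum_congr rfl fun j _ => ?_
  have step2 : ∀ n : Z3, f n * (starRingEnd ℂ) (conv (b j) (pd j g) n)
      = ∑' m : Z3, Gk b f g j (n, m) := by
    intro n
    rw [conv]
    have hstar : (starRingEnd ℂ) (∑' m : Z3, b j m * pd j g (n - m))
        = ∑' m : Z3, (starRingEnd ℂ) (b j m * pd j g (n - m)) := by
      show star (∑' m : Z3, b j m * pd j g (n - m))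
          = ∑' m : Z3, star (b j m * pd j g (n - m))
      exact tsum_star
    rw [hstar, ← tsum_mul_left]
    rfl
  calc ∑' n : Z3, f n * (starRingEnd ℂ) (conv (b j) (pd j g) n)
      = ∑' n : Z3, ∑' m : Z3, Gk b f g j (n, m) := tsum_congr step2
    _ = ∑' p : Z3 × Z3, Gk b f g j p :=
        (Summable.tsum_prod' (summable_Gk hb hf hg j)
          (fun n => (summable_Gk hb hf hg j).prod_factor n)).symm
    _ = ∑' p : Z3 × Z3, Gk b f g j (e2 p) := (Equiv.tsum_eq e2 (Gk b f g j)).symm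

include hb hf hg in
lemma Sp_skew (hdiv : DivFree b) :
    Sp (transport b f) g = - Sp f (transport b g) := by
  rw [eq_neg_iff_add_eq_zero, Sp_transport_left hb hf hg, Sp_transport_right hb hf hg,
    ← Finset.sum_add_distrib]
  have hz : ∀ j : Fin 3, ∑' p : Z3 × Z3, Fk b f g j (e1 p) + ∑' p : Z3 × Z3, Gk b f g j (e2 p)
      = ∑' p : Z3 × Z3, (Fk b f g j (e1 p) + Gk b f g j (e2 p)) := by
    intro j
    exact (Summable.tsum_add ((Equiv.summable_iff (f := Fk b f g j) e1).2 (summable_Fk hb hf hg j))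
      ((Equiv.summable_iff (f := Gk b f g j) e2).2 (summable_Gk hb hf hg j))).symm
  calc ∑ j : Fin 3, (∑' p : Z3 × Z3, Fk b f g j (e1 p) + ∑' p : Z3 × Z3, Gk b f g j (e2 p))
      = ∑ j : Fin 3, ∑' p : Z3 × Z3, (Fk b f g j (e1 p) + Gk b f g j (e2 p)) :=
        Finset.sum_congr rfl fun j _ => hz j
    _ = ∑' p : Z3 × Z3, ∑ j : Fin 3, (Fk b f g j (e1 p) + Gk b f g j (e2 p)) := by
        refine (Summable.tsum_finsetSum (fun j _ => ?_)).symm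
        exact ((Equiv.summable_iff (f := Fk b f g j) e1).2 (summable_Fk hb hf hg j)).add
          ((Equiv.summable_iff (f := Gk b f g j) e2).2 (summable_Gk hb hf hg j))
    _ = ∑' p : Z3 × Z3, (0 : ℂ) := by
        refine tsum_congr fun p => ?_
        have he1 : ∀ j, Fk b f g j (e1 p) = b j p.1 * pd j f p.2 * (starRingEnd ℂ) (g (p.1 + p.2)) := by
          intro j
          have he0 : Fk b f g j (e1 p)
              = b j p.1 * pd j f (p.1 + p.2 - p.1) * (starRingEnd ℂ) (g (p.1 + p.2)) := rfl
          rw [he0, add_sub_cancel_left]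
        have he2 : ∀ j, Gk b f g j (e2 p)
            = f p.2 * (starRingEnd ℂ) (b j (-p.1) * pd j g (p.2 - -p.1)) := fun j => rfl
        calc ∑ j : Fin 3, (Fk b f g j (e1 p) + Gk b f g j (e2 p))
            = ∑ j : Fin 3, (b j p.1 * pd j f p.2 * (starRingEnd ℂ) (g (p.1 + p.2))
              + f p.2 * (starRingEnd ℂ) (b j (-p.1) * pd j g (p.2 - -p.1))) :=
              Finset.sum_congr rfl fun j _ => by rw [he1 j, he2 j]
          _ = 0 := skew_pt hb hdiv f g p.1 p.2
    _ = 0 := tsum_zero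

end skew

/-! real-level inner product lemmas -/

lemma inner2V_congr {A A' B B' : Fin 2 → Z3 → ℂ}
    (h1 : ∀ i n, A i n = A' i n) (h2 : ∀ i n, B i n = B' i n) :
    inner2V A B = inner2V A' B' := by
  rw [inner2V, inner2V]
  refine Finset.sum_congr rfl fun i _ => ?_
  rw [inner2, inner2]
  congr 1
  exact tsum_congr fun n => by rw [h1 i n, h2 i n]

lemma inner2V_add_left {A A' B : Fin 2 → Z3 → ℂ}
    (hA : ∀ i, RapidDecay (A i)) (hA' : ∀ i, RapidDecay (A' i))
    (hB : ∀ i, RapidDecay (B i)) :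
    inner2V (fun i n => A i n + A' i n) B = inner2V A B + inner2V A' B := by
  rw [inner2V, inner2V, inner2V, ← Finset.sum_add_distrib]
  refine Finset.sum_congr rfl fun i _ => ?_
  rw [inner2_eq, inner2_eq, inner2_eq, ← Complex.add_re,
    ← Sp_add_left (hA i) (hA' i) (hB i)]

lemma inner2V_add_right {A B B' : Fin 2 → Z3 → ℂ}
    (hA : ∀ i, RapidDecay (A i)) (hB : ∀ i, RapidDecay (B i))
    (hB' : ∀ i, RapidDecay (B' i)) :
    inner2V A (fun i n => B i n + B' i n) = inner2V A B + inner2V A B' := by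
  rw [inner2V, inner2V, inner2V, ← Finset.sum_add_distrib]
  refine Finset.sum_congr rfl fun i _ => ?_
  rw [inner2_eq, inner2_eq, inner2_eq, ← Complex.add_re,
    ← Sp_add_right (hA i) (hB i) (hB' i)]

lemma inner2V_lam_move (s : ℝ) (A B : Fin 2 → Z3 → ℂ) :
    inner2V (lamV s A) B = inner2V A (lamV s B) := by
  rw [inner2V, inner2V]
  refine Finset.sum_congr rfl fun i _ => ?_
  rw [inner2_eq, inner2_eq]
  exact congrArg Complex.re (Sp_lam_move s (A i) (B i))

lemma inner2V_hproj_adjoint {A B : Fin 2 → Z3 → ℂ}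
    (hA : ∀ i, RapidDecay (A i)) (hB : ∀ i, RapidDecay (B i)) :
    inner2V (hproj A) B = inner2V A (hproj B) := by
  rw [inner2V_eq, inner2V_eq]
  exact congrArg Complex.re (SpV_hproj_adjoint hA hB)

lemma inner2V_skew {b : Fin 3 → Z3 → ℂ} (hb : SmoothV3 b) (hdiv : DivFree b)
    {F G : Fin 2 → Z3 → ℂ} (hF : ∀ i, RapidDecay (F i)) (hG : ∀ i, RapidDecay (G i)) :
    inner2V (transportV b F) G = - inner2V F (transportV b G) := by
  rw [inner2V, inner2V, ← Finset.sum_neg_distrib]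
  refine Finset.sum_congr rfl fun i _ => ?_
  rw [inner2_eq, inner2_eq, ← Complex.neg_re]
  exact congrArg Complex.re (Sp_skew hb (hF i) (hG i) hdiv)

lemma inner2V_zero_right (A : Fin 2 → Z3 → ℂ) :
    inner2V A (fun _ _ => (0:ℂ)) = 0 := by
  rw [inner2V]
  refine Finset.sum_eq_zero fun i _ => ?_
  rw [inner2_eq]
  have : Sp (A i) (fun _ => (0:ℂ)) = 0 := Sp_zero_right (A i)
  rw [this]; rfl

lemma inner2_self {c : Z3 → ℂ} (hc : RapidDecay c) : inner2 c c = l2sq c := by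
  rw [inner2, l2sq]
  have h : ∀ n : Z3, c n * (starRingEnd ℂ) (c n) = ((‖c n‖ ^ 2 : ℝ) : ℂ) := fun n => by
    rw [Complex.mul_conj, Complex.normSq_eq_norm_sq]
  rw [tsum_congr h, Complex.re_tsum (Complex.summable_ofReal.2 (summable_normsq hc))]
  exact tsum_congr fun n => Complex.ofReal_re _

lemma l2normV_sq {X : Fin 2 → Z3 → ℂ} (hX : ∀ i, RapidDecay (X i)) :
    l2normV X ^ 2 = inner2V X X := by
  have hnn : (0:ℝ) ≤ ∑ i : Fin 2, l2sq (X i) :=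
    Finset.sum_nonneg fun i _ => tsum_nonneg fun n => sq_nonneg _
  rw [l2normV, Real.sq_sqrt hnn, inner2V]
  exact (Finset.sum_congr rfl fun i _ => (inner2_self (hX i))).symm

/-! additivity of transport and commLam -/

lemma transport_add {b : Fin 3 → Z3 → ℂ} (hb : ∀ j, RapidDecay (b j))
    {c d e : Z3 → ℂ} (hc : RapidDecay c) (hd : RapidDecay d)
    (h : ∀ m, e m = c m + d m) (n : Z3) :
    transport b e n = transport b c n + transport b d n := by
  rw [transport, transport, transport, ← Finset.sum_add_distrib]
  refine Finset.sum_congr rfl fun j _ => ?_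
  have hsc : Summable (fun m => b j m * pd j c (n - m)) :=
    Summable.of_norm (conv_norm_le (hb j) (rd_pd j hc) n).1
  have hsd : Summable (fun m => b j m * pd j d (n - m)) :=
    Summable.of_norm (conv_norm_le (hb j) (rd_pd j hd) n).1
  rw [conv, conv, conv, ← Summable.tsum_add hsc hsd]
  refine tsum_congr fun m => ?_
  have hpd : pd j e (n - m) = pd j c (n - m) + pd j d (n - m) := by
    rw [pd, pd, pd, h]; ring
  rw [hpd]; ring

lemma lam_add_pt (s : ℝ) {c d e : Z3 → ℂ} (h : ∀ m, e m = c m + d m) (n : Z3) :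
    lam s e n = lam s c n + lam s d n := by
  rw [lam, lam, lam, h]; ring

lemma commLam_add_pt {σ : ℝ} (hσ : 0 ≤ σ) {b : Fin 3 → Z3 → ℂ}
    (hb : ∀ j, RapidDecay (b j)) {c d e : Z3 → ℂ}
    (hc : RapidDecay c) (hd : RapidDecay d) (h : ∀ m, e m = c m + d m) (n : Z3) :
    commLam σ b e n = commLam σ b c n + commLam σ b d n := by
  simp only [commLam, Pi.sub_apply]
  have h1 : transport b e n = transport b c n + transport b d n :=
    transport_add hb hc hd h n
  have h2 : transport b (lam σ e) n
      = transport b (lam σ c) n + transport b (lam σ d) n :=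
    transport_add hb (rd_lam hσ hc) (rd_lam hσ hd) (lam_add_pt σ h) n
  have h3 : lam σ (transport b e) n
      = lam σ (transport b c) n + lam σ (transport b d) n := by
    rw [lam, lam, lam, h1]; ring
  rw [h2, h3]; ring


/-- Let `σ ≥ 0`. For every smooth divergence-free vector field `b` on `𝕋³`
and every smooth ℝ²-valued `V` with `𝒫V = V`, writing `B = b·∇`,
`⟨(𝒫B)²V, Λ^{2σ}V⟩ + ‖Λ^σ 𝒫BV‖² = ⟨[Λ^σ,B][𝒫,B]V, Λ^σV⟩ + ⟨Λ^σ[𝒫,B]V, [Λ^σ,B]V⟩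
 + ⟨[[Λ^σ,B],B]V, Λ^σV⟩ + ‖[Λ^σ,B]V‖²`. -/
theorem stmt6 (σ : ℝ) (hσ : 0 ≤ σ) :
    ∀ b : Fin 3 → Z3 → ℂ, SmoothV3 b → DivFree b →
      ∀ V : Fin 2 → Z3 → ℂ, SmoothV2 V → hproj V = V →
        inner2V (PB b (PB b V)) (lamV (2 * σ) V) + (l2normV (lamV σ (PB b V))) ^ 2 =
          inner2V (commLamV σ b (commProj b V)) (lamV σ V)
          + inner2V (lamV σ (commProj b V)) (commLamV σ b V)
          + inner2V
              (fun i => commLam σ b (transport b (V i)) - transport b (commLam σ b (V i)))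
              (lamV σ V)
          + (l2normV (commLamV σ b V)) ^ 2 := by
  intro b hb hdiv V hV2 hV
  have hbRD : ∀ j, RapidDecay (b j) := fun j => (hb j).2
  have hVRD : ∀ i, RapidDecay (V i) := fun i => (hV2 i).2
  have rBV : ∀ i, RapidDecay (transportV b V i) := fun i => rd_transport hbRD (hVRD i)
  have rW : ∀ i, RapidDecay (PB b V i) := fun i => rd_hproj rBV i
  have rLV : ∀ i, RapidDecay (lamV σ V i) := fun i => rd_lam hσ (hVRD i)
  have rLW : ∀ i, RapidDecay (lamV σ (PB b V) i) := fun i => rd_lam hσ (rW i)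
  have rX : ∀ i, RapidDecay (lamV σ (transportV b V) i) := fun i => rd_lam hσ (rBV i)
  have rA : ∀ i, RapidDecay (transportV b (PB b V) i) := fun i => rd_transport hbRD (rW i)
  have rcLV : ∀ i, RapidDecay (commLamV σ b V i) := fun i => rd_commLam hσ hbRD (hVRD i)
  have rcLW : ∀ i, RapidDecay (commLamV σ b (PB b V) i) := fun i => rd_commLam hσ hbRD (rW i)
  have rBLV : ∀ i, RapidDecay (transportV b (lamV σ V) i) := fun i => rd_transport hbRD (rLV i)
  have rBLW : ∀ i, RapidDecay (transportV b (lamV σ (PB b V)) i) :=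
    fun i => rd_transport hbRD (rLW i)
  have hcP : ∀ i n, commProj b V i n = PB b V i n - transportV b V i n := by
    intro i n
    simp only [commProj, hV, Pi.sub_apply, PB]
  have rcP : ∀ i, RapidDecay (commProj b V i) := fun i =>
    rd_congr (fun n => (hcP i n).symm) ((rW i).sub (rBV i))
  have rLcP : ∀ i, RapidDecay (lamV σ (commProj b V) i) := fun i => rd_lam hσ (rcP i)
  have rcLcP : ∀ i, RapidDecay (commLamV σ b (commProj b V) i) :=
    fun i => rd_commLam hσ hbRD (rcP i)
  have rcLBV : ∀ i, RapidDecay (commLam σ b (transportV b V i)) :=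
    fun i => rd_commLam hσ hbRD (rBV i)
  have rdbl : ∀ i, RapidDecay
      ((fun i => commLam σ b (transport b (V i)) - transport b (commLam σ b (V i))) i) :=
    fun i => rd_congr (fun n => rfl)
      ((rd_commLam hσ hbRD (rd_transport hbRD (hVRD i))).sub (rd_transport hbRD (rcLV i)))
  -- pointwise decompositions
  have pW : ∀ i n, PB b V i n = transportV b V i n + commProj b V i n := fun i n => by
    rw [hcP i n]; ring
  have pLW : ∀ i n, lamV σ (PB b V) i n
      = lamV σ (transportV b V) i n + lamV σ (commProj b V) i n :=
    fun i n => lam_add_pt σ (pW i) n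
  have pX : ∀ i n, lamV σ (transportV b V) i n
      = commLamV σ b V i n + transportV b (lamV σ V) i n := by
    intro i n
    simp only [lamV, transportV, commLamV, commLam, Pi.sub_apply]
    ring
  have pLA : ∀ i n, lamV σ (transportV b (PB b V)) i n
      = commLamV σ b (PB b V) i n + transportV b (lamV σ (PB b V)) i n := by
    intro i n
    simp only [lamV, transportV, commLamV, commLam, Pi.sub_apply]
    ring
  have pcLW : ∀ i n, commLamV σ b (PB b V) i n
      = commLam σ b (transportV b V i) n + commLam σ b (commProj b V i) n :=
    fun i n => commLam_add_pt hσ hbRD (rBV i) (rcP i) (pW i) n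
  have pdbl : ∀ i n, commLam σ b (transportV b V i) n
      = (fun i => commLam σ b (transport b (V i)) - transport b (commLam σ b (V i))) i n
        + transportV b (commLamV σ b V) i n := by
    intro i n
    simp only [transportV, commLamV, Pi.sub_apply]
    ring
  -- main chain
  have L1 : inner2V (PB b (PB b V)) (lamV (2 * σ) V)
      = inner2V (lamV σ (transportV b (PB b V))) (lamV σ V) := by
    calc inner2V (PB b (PB b V)) (lamV (2 * σ) V)
        = inner2V (hproj (transportV b (PB b V))) (lamV σ (lamV σ V)) :=
          inner2V_congr (fun i n => rfl) (fun i n => lam_lam hσ (V i) n)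
      _ = inner2V (lamV σ (hproj (transportV b (PB b V)))) (lamV σ V) :=
          (inner2V_lam_move σ (hproj (transportV b (PB b V))) (lamV σ V)).symm
      _ = inner2V (hproj (lamV σ (transportV b (PB b V)))) (lamV σ V) :=
          inner2V_congr (fun i n => (hproj_lam σ (transportV b (PB b V)) i n).symm)
            (fun i n => rfl)
      _ = inner2V (lamV σ (transportV b (PB b V))) (hproj (lamV σ V)) :=
          inner2V_hproj_adjoint (fun i => rd_lam hσ (rA i)) rLV
      _ = inner2V (lamV σ (transportV b (PB b V))) (lamV σ V) :=
          inner2V_congr (fun i n => rfl)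
            (fun i n => by rw [hproj_lam σ V i n, hV])
  have L2 : inner2V (lamV σ (transportV b (PB b V))) (lamV σ V)
      = inner2V (commLamV σ b (PB b V)) (lamV σ V)
        + inner2V (transportV b (lamV σ (PB b V))) (lamV σ V) := by
    rw [← inner2V_add_left rcLW rBLW rLV]
    exact inner2V_congr pLA (fun _ _ => rfl)
  have L3 : inner2V (transportV b (lamV σ (PB b V))) (lamV σ V)
      = - inner2V (lamV σ (PB b V)) (transportV b (lamV σ V)) :=
    inner2V_skew hb hdiv rLW rLV
  have L4 : l2normV (lamV σ (PB b V)) ^ 2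
      = inner2V (lamV σ (PB b V)) (lamV σ (PB b V)) := l2normV_sq rLW
  have L5 : inner2V (lamV σ (PB b V)) (lamV σ (PB b V))
      = inner2V (lamV σ (PB b V)) (lamV σ (transportV b V))
        + inner2V (lamV σ (PB b V)) (lamV σ (commProj b V)) := by
    rw [← inner2V_add_right rLW rX rLcP]
    exact inner2V_congr (fun _ _ => rfl) pLW
  have L6 : inner2V (lamV σ (PB b V)) (lamV σ (transportV b V))
      = inner2V (lamV σ (PB b V)) (commLamV σ b V)
        + inner2V (lamV σ (PB b V)) (transportV b (lamV σ V)) := by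
    rw [← inner2V_add_right rLW rcLV rBLV]
    exact inner2V_congr (fun _ _ => rfl) pX
  have L7 : inner2V (lamV σ (PB b V)) (lamV σ (commProj b V)) = 0 := by
    have h1 : ∀ i n, lamV σ (PB b V) i n = hproj (lamV σ (transportV b V)) i n :=
      fun i n => (hproj_lam σ (transportV b V) i n).symm
    have h2 : ∀ i n, lamV σ (commProj b V) i n
        = hproj (lamV σ (transportV b V)) i n - lamV σ (transportV b V) i n := by
      intro i n
      have e1 : lamV σ (commProj b V) i n
          = lamV σ (PB b V) i n - lamV σ (transportV b V) i n := by
        simp only [lamV, lam]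
        rw [hcP i n]
        ring
      rw [e1, h1 i n]
    calc inner2V (lamV σ (PB b V)) (lamV σ (commProj b V))
        = inner2V (hproj (lamV σ (transportV b V)))
            (fun i n => hproj (lamV σ (transportV b V)) i n - lamV σ (transportV b V) i n) :=
          inner2V_congr h1 h2
      _ = inner2V (lamV σ (transportV b V))
            (hproj (fun i n => hproj (lamV σ (transportV b V)) i n
              - lamV σ (transportV b V) i n)) :=
          inner2V_hproj_adjoint rX (fun i => (rd_hproj rX i).sub (rX i))
      _ = inner2V (lamV σ (transportV b V)) (fun _ _ => (0:ℂ)) :=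
          inner2V_congr (fun _ _ => rfl)
            (fun i n => by
              rw [hproj_sub (hproj (lamV σ (transportV b V))) (lamV σ (transportV b V)) i n,
                hproj_idem (lamV σ (transportV b V)) i n, sub_self])
      _ = 0 := inner2V_zero_right _
  have L8 : inner2V (lamV σ (PB b V)) (commLamV σ b V)
      = inner2V (lamV σ (transportV b V)) (commLamV σ b V)
        + inner2V (lamV σ (commProj b V)) (commLamV σ b V) := by
    rw [← inner2V_add_left rX rLcP rcLV]
    exact inner2V_congr pLW (fun _ _ => rfl)
  have L9 : inner2V (lamV σ (transportV b V)) (commLamV σ b V)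
      = inner2V (commLamV σ b V) (commLamV σ b V)
        + inner2V (transportV b (lamV σ V)) (commLamV σ b V) := by
    rw [← inner2V_add_left rcLV rBLV rcLV]
    exact inner2V_congr pX (fun _ _ => rfl)
  have L10 : inner2V (commLamV σ b V) (commLamV σ b V)
      = l2normV (commLamV σ b V) ^ 2 := (l2normV_sq rcLV).symm
  have R1 : inner2V (commLamV σ b (PB b V)) (lamV σ V)
      = inner2V (commLamV σ b (commProj b V)) (lamV σ V)
        + inner2V (fun i => commLam σ b (transportV b V i)) (lamV σ V) := by
    rw [← inner2V_add_left rcLcP rcLBV rLV]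
    exact inner2V_congr (fun i n => (pcLW i n).trans (add_comm _ _)) (fun _ _ => rfl)
  have R2 : inner2V (fun i => commLam σ b (transportV b V i)) (lamV σ V)
      = inner2V
          (fun i => commLam σ b (transport b (V i)) - transport b (commLam σ b (V i)))
          (lamV σ V)
        + inner2V (transportV b (commLamV σ b V)) (lamV σ V) := by
    have rBcLV : ∀ i, RapidDecay (transportV b (commLamV σ b V) i) :=
      fun i => rd_transport hbRD (rcLV i)
    rw [← inner2V_add_left rdbl rBcLV rLV]
    exact inner2V_congr pdbl (fun _ _ => rfl)
  have R3 : inner2V (transportV b (commLamV σ b V)) (lamV σ V)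
      = - inner2V (commLamV σ b V) (transportV b (lamV σ V)) :=
    inner2V_skew hb hdiv rcLV rLV
  have R4 : inner2V (transportV b (lamV σ V)) (commLamV σ b V)
      = inner2V (commLamV σ b V) (transportV b (lamV σ V)) := inner2V_comm _ _
  linarith
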